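/- arXiv:2011.03396 — 2 statements merged into one kernel-verified Lean document; each statement's English description precedes it below -/
import Mathlib

section
/- Let λ > 0 and for μ ∈ ℝ let Λ(μ, λ) denote the Laplace probability measure on ℝ with density x ↦ (1/(2λ)) · exp(−|x − μ|/λ) with respect to Lebesgue measure. Let s₁, …, s_n (n ≥ 2) be real numbers (the secrets). Then the Bayes security of the Laplace mechanism s ↦ s + Λ(0, λ) equals β* = exp(− max_{i, j} |s_i − s_j| / (2λ)); precisely, min over pairs i ≠ j of (1 − tv(Λ(s_i, λ), Λ(s_j, λ))) = exp(− max_{i, j} |s_i − s_j| / (2λ)), where tv(P, Q) denotes the total variation distance sup over measurable sets A of (P(A) − Q(A)). In particular, for any μ_p, μ_q ∈ ℝ, tv(Λ(μ_p, λ), Λ(μ_q, λ)) = 1 − exp(−|μ_p − μ_q|/(2λ)). -/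
open MeasureTheory

/-- The Laplace measure `Λ(μ, λ)` on `ℝ`, with density `x ↦ (1/(2λ))·exp(−|x − μ|/λ)`
with respect to Lebesgue measure. -/
noncomputable def laplaceMeasure (μ lam : ℝ) : Measure ℝ :=
  volume.withDensity fun x => ENNReal.ofReal ((1 / (2 * lam)) * Real.exp (-|x - μ| / lam))

/-- Total variation distance: `tv(P, Q) = sup_{A measurable} (P(A) − Q(A))`. -/
noncomputable def tvDist (P Q : Measure ℝ) : ℝ :=
  ⨆ A : {A : Set ℝ // MeasurableSet A}, ((P A.1).toReal - (Q A.1).toReal)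

open Real Set

noncomputable def lap (lam c x : ℝ) : ℝ := (1 / (2 * lam)) * Real.exp (-|x - c| / lam)

lemma lap_nonneg {lam : ℝ} (hlam : 0 < lam) (c x : ℝ) : 0 ≤ lap lam c x := by
  unfold lap; positivity

lemma lap_continuous (lam c : ℝ) : Continuous (lap lam c) := by
  unfold lap; fun_prop

lemma exp_integrableOn_Iic {b : ℝ} (hb : 0 < b) (a : ℝ) :
    IntegrableOn (fun x : ℝ => Real.exp (b * x)) (Iic a) := by
  refine integrableOn_Iic_of_intervalIntegral_norm_bounded (Real.exp (b * a) / b) a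
    (fun y => ((Real.continuous_exp.comp (continuous_const.mul continuous_id)).integrableOn_Ioc))
    Filter.tendsto_id ?_
  filter_upwards with y
  have h1 : ∀ x : ℝ, ‖Real.exp (b * x)‖ = Real.exp (b * x) := fun x => norm_of_nonneg (exp_pos _).le
  simp_rw [h1]
  have : (∫ x in y..a, Real.exp (b * x)) = b⁻¹ • ∫ x in b * y..b * a, Real.exp x := by
    simpa using intervalIntegral.integral_comp_mul_left (fun x => Real.exp x) (a := y) (b := a) hb.ne'
  rw [id_eq, this, integral_exp, smul_eq_mul]
  rw [div_eq_inv_mul]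
  have := (exp_pos (b * y)).le
  nlinarith [inv_nonneg.2 hb.le, exp_pos (b*y), inv_pos.2 hb]

lemma expShift_integrableOn_Iic {lam : ℝ} (hlam : 0 < lam) (c a : ℝ) :
    IntegrableOn (fun x : ℝ => Real.exp ((x - c) / lam)) (Iic a) := by
  have h := (exp_integrableOn_Iic (b := 1 / lam) (by positivity) a).const_mul (Real.exp (-c / lam))
  refine MeasureTheory.IntegrableOn.congr_fun h (fun x _ => ?_) measurableSet_Iic
  rw [← Real.exp_add]
  congr 1
  field_simp
  ring

lemma expShift_integrableOn_Ioi {lam : ℝ} (hlam : 0 < lam) (c a : ℝ) :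
    IntegrableOn (fun x : ℝ => Real.exp (-(x - c) / lam)) (Ioi a) := by
  have h := (exp_neg_integrableOn_Ioi a (b := 1 / lam) (by positivity)).const_mul (Real.exp (c / lam))
  refine MeasureTheory.IntegrableOn.congr_fun h (fun x _ => ?_) measurableSet_Ioi
  rw [← Real.exp_add]
  congr 1
  field_simp
  ring

lemma integral_expShift_Iic {lam : ℝ} (hlam : 0 < lam) (c a : ℝ) :
    ∫ x in Iic a, Real.exp ((x - c) / lam) = lam * Real.exp ((a - c) / lam) := by
  have hderiv : ∀ x ∈ Iic a, HasDerivAt (fun x => lam * Real.exp ((x - c) / lam))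
      (Real.exp ((x - c) / lam)) x := by
    intro x _
    have h1 : HasDerivAt (fun x : ℝ => (x - c) / lam) (1 / lam) x := by
      simpa using ((hasDerivAt_id x).sub_const c).div_const lam
    have := (h1.exp).const_mul lam
    rw [one_div, ← mul_assoc, mul_comm lam, mul_assoc, mul_inv_cancel₀ hlam.ne', mul_one] at this
    exact this
  have htend : Filter.Tendsto (fun x => lam * Real.exp ((x - c) / lam)) Filter.atBot (nhds 0) := by
    rw [show (0 : ℝ) = lam * 0 by ring]
    refine Filter.Tendsto.const_mul _ ?_
    refine Real.tendsto_exp_atBot.comp ?_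
    apply Filter.Tendsto.atBot_div_const hlam
    exact Filter.tendsto_atBot_add_const_right _ _ Filter.tendsto_id
  have := integral_Iic_of_hasDerivAt_of_tendsto' hderiv (expShift_integrableOn_Iic hlam c a) htend
  rw [this, sub_zero]

lemma integral_expShift_Ioi {lam : ℝ} (hlam : 0 < lam) (c a : ℝ) :
    ∫ x in Ioi a, Real.exp (-(x - c) / lam) = lam * Real.exp (-(a - c) / lam) := by
  have h1 : (∫ x in Ioi a, Real.exp ((-x - (-c)) / lam)) = ∫ x in Iic (-a), Real.exp ((x - (-c)) / lam) :=
    integral_comp_neg_Ioi (f := fun x => Real.exp ((x - (-c)) / lam)) (c := a)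
  have h2 : (∫ x in Ioi a, Real.exp (-(x - c) / lam)) = ∫ x in Ioi a, Real.exp ((-x - (-c)) / lam) := by
    congr 1 with x; congr 1; ring
  rw [h2, h1, integral_expShift_Iic hlam]
  congr 1; ring_nf

lemma lap_eq_left {lam c x : ℝ} (h : x ≤ c) :
    lap lam c x = (1 / (2 * lam)) * Real.exp ((x - c) / lam) := by
  unfold lap
  rw [abs_of_nonpos (by linarith), neg_neg]

lemma lap_eq_right {lam c x : ℝ} (h : c ≤ x) :
    lap lam c x = (1 / (2 * lam)) * Real.exp (-(x - c) / lam) := by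
  unfold lap
  rw [abs_of_nonneg (by linarith)]

lemma lap_integrableOn_Iic {lam : ℝ} (hlam : 0 < lam) (c a : ℝ) (h : a ≤ c) :
    IntegrableOn (lap lam c) (Iic a) := by
  refine MeasureTheory.IntegrableOn.congr_fun
    ((expShift_integrableOn_Iic hlam c a).const_mul (1 / (2 * lam)))
    (fun x hx => ?_) measurableSet_Iic
  exact (lap_eq_left (le_trans hx h)).symm

lemma lap_integrableOn_Ioi {lam : ℝ} (hlam : 0 < lam) (c a : ℝ) (h : c ≤ a) :
    IntegrableOn (lap lam c) (Ioi a) := by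
  refine MeasureTheory.IntegrableOn.congr_fun
    ((expShift_integrableOn_Ioi hlam c a).const_mul (1 / (2 * lam)))
    (fun x hx => ?_) measurableSet_Ioi
  exact (lap_eq_right (le_trans h (le_of_lt hx))).symm

lemma lap_integrable {lam : ℝ} (hlam : 0 < lam) (c : ℝ) : Integrable (lap lam c) := by
  rw [← integrableOn_univ, ← Iic_union_Ioi (a := c)]
  exact (lap_integrableOn_Iic hlam c c le_rfl).union (lap_integrableOn_Ioi hlam c c le_rfl)

lemma setIntegral_lap_Iic {lam : ℝ} (hlam : 0 < lam) {c a : ℝ} (h : a ≤ c) :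
    ∫ x in Iic a, lap lam c x = 1 / 2 * Real.exp ((a - c) / lam) := by
  rw [setIntegral_congr_fun measurableSet_Iic (fun x hx => lap_eq_left (le_trans hx h)),
    MeasureTheory.integral_const_mul, integral_expShift_Iic hlam]
  field_simp

lemma setIntegral_lap_Ioi {lam : ℝ} (hlam : 0 < lam) {c a : ℝ} (h : c ≤ a) :
    ∫ x in Ioi a, lap lam c x = 1 / 2 * Real.exp (-(a - c) / lam) := by
  rw [setIntegral_congr_fun measurableSet_Ioi
      (fun x hx => lap_eq_right (le_trans h (le_of_lt hx))),
    MeasureTheory.integral_const_mul, integral_expShift_Ioi hlam]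
  field_simp

lemma integral_lap {lam : ℝ} (hlam : 0 < lam) (c : ℝ) : ∫ x, lap lam c x = 1 := by
  rw [← setIntegral_univ, ← Iic_union_Ioi (a := c),
    setIntegral_union (Iic_disjoint_Ioi le_rfl) measurableSet_Ioi
      (lap_integrableOn_Iic hlam c c le_rfl) (lap_integrableOn_Ioi hlam c c le_rfl),
    setIntegral_lap_Iic hlam le_rfl, setIntegral_lap_Ioi hlam le_rfl]
  norm_num

lemma lap_measure_apply {lam : ℝ} (hlam : 0 < lam) (c : ℝ) {A : Set ℝ} (hA : MeasurableSet A) :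
    ((laplaceMeasure c lam) A).toReal = ∫ x in A, lap lam c x := by
  rw [laplaceMeasure, withDensity_apply _ hA,
    MeasureTheory.integral_eq_lintegral_of_nonneg_ae
      (Filter.Eventually.of_forall fun x => lap_nonneg hlam c x)
      ((lap_continuous lam c).aestronglyMeasurable)]
  rfl

lemma setIntegral_lap_Iio_left {lam : ℝ} (hlam : 0 < lam) {c a : ℝ} (h : a ≤ c) :
    ∫ x in Iio a, lap lam c x = 1 / 2 * Real.exp ((a - c) / lam) := by
  rw [setIntegral_congr_set Iio_ae_eq_Iic, setIntegral_lap_Iic hlam h]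

lemma setIntegral_lap_Iio_right {lam : ℝ} (hlam : 0 < lam) {c a : ℝ} (h : c ≤ a) :
    ∫ x in Iio a, lap lam c x = 1 - 1 / 2 * Real.exp (-(a - c) / lam) := by
  have h1 := MeasureTheory.integral_add_compl measurableSet_Iio (lap_integrable hlam c)
    (s := Iio a)
  rw [compl_Iio, integral_lap hlam] at h1
  have h2 : ∫ x in Ici a, lap lam c x = 1 / 2 * Real.exp (-(a - c) / lam) := by
    rw [setIntegral_congr_set (Ioi_ae_eq_Ici).symm, setIntegral_lap_Ioi hlam h]
  linarith

lemma abs_sub_le_mid {a b x : ℝ} (hab : a ≤ b) (hx : x ≤ (a + b) / 2) :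
    |x - a| ≤ |x - b| := by
  rcases le_total x a with h | h
  · rw [abs_of_nonpos (by linarith), abs_of_nonpos (by linarith)]; linarith
  · rw [abs_of_nonneg (by linarith), abs_of_nonpos (by linarith)]; linarith

lemma abs_sub_le_mid' {a b x : ℝ} (hab : a ≤ b) (hx : (a + b) / 2 ≤ x) :
    |x - b| ≤ |x - a| := by
  rcases le_total x b with h | h
  · rw [abs_of_nonpos (by linarith), abs_of_nonneg (by linarith)]; linarith
  · rw [abs_of_nonneg (by linarith), abs_of_nonneg (by linarith)]; linarith

lemma lap_le_lap {lam : ℝ} (hlam : 0 < lam) {c d x : ℝ} (h : |x - c| ≤ |x - d|) :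
    lap lam d x ≤ lap lam c x := by
  unfold lap
  refine mul_le_mul_of_nonneg_left (Real.exp_le_exp.2 ?_) (by positivity)
  exact (div_le_div_iff_of_pos_right hlam).2 (neg_le_neg h)

lemma tvDist_lap_lt {lam : ℝ} (hlam : 0 < lam) {μp μq : ℝ} (h : μp < μq) :
    tvDist (laplaceMeasure μp lam) (laplaceMeasure μq lam)
      = 1 - Real.exp (-(μq - μp) / (2 * lam)) := by
  set m := (μp + μq) / 2 with hm
  have hpm : μp ≤ m := by rw [hm]; linarith
  have hmq : m ≤ μq := by rw [hm]; linarith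
  have hf := lap_integrable hlam μp
  have hg := lap_integrable hlam μq
  have hsub : Integrable (fun x => lap lam μp x - lap lam μq x) := hf.sub hg
  have hval : (∫ x in Iio m, lap lam μp x) - (∫ x in Iio m, lap lam μq x)
      = 1 - Real.exp (-(μq - μp) / (2 * lam)) := by
    rw [setIntegral_lap_Iio_right hlam hpm, setIntegral_lap_Iio_left hlam hmq]
    have e1 : -(m - μp) / lam = -(μq - μp) / (2 * lam) := by rw [hm]; field_simp; ring
    have e2 : (m - μq) / lam = -(μq - μp) / (2 * lam) := by rw [hm]; field_simp; ring
    rw [e1, e2]; ring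
  have hub : ∀ A : {A : Set ℝ // MeasurableSet A},
      ((laplaceMeasure μp lam) A.1).toReal - ((laplaceMeasure μq lam) A.1).toReal
        ≤ 1 - Real.exp (-(μq - μp) / (2 * lam)) := by
    rintro ⟨A, hA⟩
    rw [lap_measure_apply hlam _ hA, lap_measure_apply hlam _ hA, ← hval]
    have key : (∫ x in A, (lap lam μp x - lap lam μq x))
        ≤ ∫ x in Iio m, (lap lam μp x - lap lam μq x) := by
      have hsplit : A = (A ∩ Iio m) ∪ (A ∩ Ici m) := by
        rw [← inter_union_distrib_left, Iio_union_Ici, inter_univ]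
      have hd : Disjoint (A ∩ Iio m) (A ∩ Ici m) :=
        Disjoint.mono inter_subset_right inter_subset_right (Iio_disjoint_Ici le_rfl)
      have h2 : (∫ x in A ∩ Ici m, (lap lam μp x - lap lam μq x)) ≤ 0 := by
        refine setIntegral_nonpos (hA.inter measurableSet_Ici) (fun x hx => ?_)
        exact sub_nonpos.2 (lap_le_lap hlam (abs_sub_le_mid' h.le hx.2))
      have h3 : (∫ x in A ∩ Iio m, (lap lam μp x - lap lam μq x))
          ≤ ∫ x in Iio m, (lap lam μp x - lap lam μq x) := by
        refine setIntegral_mono_set hsub.integrableOn ?_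
          (HasSubset.Subset.eventuallyLE inter_subset_right)
        refine (ae_restrict_iff' measurableSet_Iio).2 (Filter.Eventually.of_forall fun x hx => ?_)
        exact sub_nonneg.2 (lap_le_lap hlam (abs_sub_le_mid h.le (le_of_lt hx)))
      calc (∫ x in A, (lap lam μp x - lap lam μq x))
          = (∫ x in A ∩ Iio m, (lap lam μp x - lap lam μq x))
            + ∫ x in A ∩ Ici m, (lap lam μp x - lap lam μq x) := by
            rw [← setIntegral_union hd (hA.inter measurableSet_Ici)
              hsub.integrableOn hsub.integrableOn, ← hsplit]
        _ ≤ ∫ x in Iio m, (lap lam μp x - lap lam μq x) := by linarith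
    rw [← integral_sub hf.integrableOn hg.integrableOn,
      ← integral_sub hf.integrableOn hg.integrableOn]
    exact key
  have hwit : ((laplaceMeasure μp lam) (Iio m)).toReal
      - ((laplaceMeasure μq lam) (Iio m)).toReal
      = 1 - Real.exp (-(μq - μp) / (2 * lam)) := by
    rw [lap_measure_apply hlam _ measurableSet_Iio, lap_measure_apply hlam _ measurableSet_Iio,
      hval]
  refine le_antisymm (ciSup_le hub) ?_
  have hbdd : BddAbove (Set.range fun A : {A : Set ℝ // MeasurableSet A} =>
      ((laplaceMeasure μp lam) A.1).toReal - ((laplaceMeasure μq lam) A.1).toReal) := by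
    refine ⟨1 - Real.exp (-(μq - μp) / (2 * lam)), ?_⟩
    rintro y ⟨A, rfl⟩
    exact hub A
  calc 1 - Real.exp (-(μq - μp) / (2 * lam))
      = ((laplaceMeasure μp lam) (Iio m)).toReal
        - ((laplaceMeasure μq lam) (Iio m)).toReal := hwit.symm
    _ ≤ tvDist (laplaceMeasure μp lam) (laplaceMeasure μq lam) :=
        le_ciSup hbdd ⟨Iio m, measurableSet_Iio⟩

instance : Nonempty {A : Set ℝ // MeasurableSet A} := ⟨⟨∅, MeasurableSet.empty⟩⟩

lemma lap_tv_bdd {lam : ℝ} (hlam : 0 < lam) (a b : ℝ) :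
    BddAbove (Set.range fun A : {A : Set ℝ // MeasurableSet A} =>
      ((laplaceMeasure a lam) A.1).toReal - ((laplaceMeasure b lam) A.1).toReal) := by
  refine ⟨1, ?_⟩
  rintro y ⟨A, rfl⟩
  have h1 : ((laplaceMeasure a lam) A.1).toReal ≤ 1 := by
    rw [lap_measure_apply hlam _ A.2, ← integral_lap hlam a]
    exact setIntegral_le_integral (lap_integrable hlam a)
      (Filter.Eventually.of_forall fun x => lap_nonneg hlam a x)
  have h2 : 0 ≤ ((laplaceMeasure b lam) A.1).toReal := ENNReal.toReal_nonneg
  simp only []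
  linarith

lemma lap_compl_toReal {lam : ℝ} (hlam : 0 < lam) (c : ℝ) {A : Set ℝ} (hA : MeasurableSet A) :
    ((laplaceMeasure c lam) Aᶜ).toReal = 1 - ((laplaceMeasure c lam) A).toReal := by
  rw [lap_measure_apply hlam _ hA.compl, lap_measure_apply hlam _ hA]
  have h := MeasureTheory.integral_add_compl hA (lap_integrable hlam c)
  rw [integral_lap hlam] at h
  linarith

lemma tvDist_lap_symm {lam : ℝ} (hlam : 0 < lam) (a b : ℝ) :
    tvDist (laplaceMeasure a lam) (laplaceMeasure b lam)
      = tvDist (laplaceMeasure b lam) (laplaceMeasure a lam) := by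
  have key : ∀ a b : ℝ, tvDist (laplaceMeasure a lam) (laplaceMeasure b lam)
      ≤ tvDist (laplaceMeasure b lam) (laplaceMeasure a lam) := by
    intro a b
    refine ciSup_le fun A => ?_
    have : ((laplaceMeasure a lam) A.1).toReal - ((laplaceMeasure b lam) A.1).toReal
        = ((laplaceMeasure b lam) A.1ᶜ).toReal - ((laplaceMeasure a lam) A.1ᶜ).toReal := by
      rw [lap_compl_toReal hlam _ A.2, lap_compl_toReal hlam _ A.2]
      ring
    rw [this]
    exact le_ciSup (lap_tv_bdd hlam b a) ⟨A.1ᶜ, A.2.compl⟩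
  exact le_antisymm (key a b) (key b a)

lemma tvDist_lap {lam : ℝ} (hlam : 0 < lam) (μp μq : ℝ) :
    tvDist (laplaceMeasure μp lam) (laplaceMeasure μq lam)
      = 1 - Real.exp (-|μp - μq| / (2 * lam)) := by
  rcases lt_trichotomy μp μq with h | h | h
  · rw [tvDist_lap_lt hlam h]
    congr 2
    rw [abs_of_neg (by linarith : μp - μq < 0)]
    ring
  · subst h
    simp only [tvDist, sub_self, abs_zero, neg_zero, zero_div, Real.exp_zero, ciSup_const]
  · rw [tvDist_lap_symm hlam, tvDist_lap_lt hlam h, abs_of_pos (by linarith)]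

/-- the Bayes security of the Laplace mechanism with secrets `s 0, …, s (n-1)`
is `exp(− max_{i,j} |s i − s j| / (2λ))`; in particular
`tv(Λ(μ_p, λ), Λ(μ_q, λ)) = 1 − exp(−|μ_p − μ_q|/(2λ))`. -/
theorem laplace_bayes_security (lam : ℝ) (hlam : 0 < lam) (n : ℕ) (hn : 2 ≤ n)
    (s : Fin n → ℝ) :
    ((Finset.univ.filter fun p : Fin n × Fin n => p.1 ≠ p.2).inf'
        ⟨(⟨0, by omega⟩, ⟨1, by omega⟩), by simp [Fin.ext_iff]⟩
        (fun p => 1 - tvDist (laplaceMeasure (s p.1) lam) (laplaceMeasure (s p.2) lam)))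
      = Real.exp (-(Finset.univ.sup' ⟨(⟨0, by omega⟩, ⟨0, by omega⟩), Finset.mem_univ _⟩
            (fun p : Fin n × Fin n => |s p.1 - s p.2|)) / (2 * lam)) ∧
    ∀ μp μq : ℝ, tvDist (laplaceMeasure μp lam) (laplaceMeasure μq lam)
      = 1 - Real.exp (-|μp - μq| / (2 * lam)) := by
  refine ⟨?_, fun μp μq => tvDist_lap hlam μp μq⟩
  set F := Finset.univ.filter fun p : Fin n × Fin n => p.1 ≠ p.2 with hF
  have hneF : F.Nonempty := ⟨(⟨0, by omega⟩, ⟨1, by omega⟩), by simp [hF, Fin.ext_iff]⟩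
  have hneU : (Finset.univ : Finset (Fin n × Fin n)).Nonempty :=
    ⟨(⟨0, by omega⟩, ⟨0, by omega⟩), Finset.mem_univ _⟩
  set g : Fin n × Fin n → ℝ := fun p => |s p.1 - s p.2| with hg
  have hfun : ∀ p ∈ F, (fun p : Fin n × Fin n => 1 -
      tvDist (laplaceMeasure (s p.1) lam) (laplaceMeasure (s p.2) lam)) p
      = (fun p => Real.exp (-(g p) / (2 * lam))) p := by
    intro p _
    simp only [tvDist_lap hlam, hg]
    ring_nf
  refine (Finset.inf'_congr _ rfl hfun).trans ?_
  -- sup over univ equals sup over F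
  have hFnonneg : 0 ≤ F.sup' hneF g := by
    obtain ⟨w, hw⟩ := hneF
    exact le_trans (abs_nonneg _) (Finset.le_sup' g hw)
  have hD : Finset.univ.sup'
      (⟨(⟨0, by omega⟩, ⟨0, by omega⟩), Finset.mem_univ _⟩ :
        (Finset.univ : Finset (Fin n × Fin n)).Nonempty) g = F.sup' hneF g := by
    refine le_antisymm (Finset.sup'_le _ _ fun p _ => ?_)
      (Finset.sup'_le _ _ fun p _ => Finset.le_sup' g (Finset.mem_univ p))
    by_cases hp : p.1 = p.2
    · have : g p = 0 := by simp [hg, hp]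
      rw [this]; exact hFnonneg
    · exact Finset.le_sup' g (by simp [hF, hp])
  rw [hD]
  obtain ⟨p0, hp0, hval⟩ := Finset.exists_mem_eq_sup' hneF g
  rw [hval]
  refine le_antisymm (Finset.inf'_le _ hp0) (Finset.le_inf' _ _ fun p hp => ?_)
  refine Real.exp_le_exp.2 ?_
  have hle : g p ≤ g p0 := hval ▸ Finset.le_sup' g hp
  have h2 : (0:ℝ) < 2 * lam := by positivity
  exact (div_le_div_iff_of_pos_right h2).2 (neg_le_neg hle)
end

section
/- Let σ > 0 and μ_p, μ_q ∈ ℝ, and let N(μ, σ²) denote the Gaussian probability measure on ℝ with mean μ and variance σ². Then the total variation distance between N(μ_p, σ²) and N(μ_q, σ²) equals Φ(α) − Φ(−α), where Φ is the cumulative distribution function of the standard Gaussian N(0, 1) and α = |μ_p − μ_q| / (2σ); equivalently, sup over Borel sets A of (N(μ_p, σ²)(A) − N(μ_q, σ²)(A)) equals the N(0, 1)-measure of the interval [−α, α]. -/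
open MeasureTheory ProbabilityTheory

/-- The cumulative distribution function `Φ` of the standard Gaussian `N(0, 1)`. -/
noncomputable def stdGaussianCDF (x : ℝ) : ℝ :=
  (gaussianReal 0 1 (Set.Iic x)).toReal

open Set

lemma N01_singleton (a : ℝ) : gaussianReal 0 1 {a} = 0 :=
  gaussianReal_absolutelyContinuous 0 one_ne_zero (Real.volume_singleton)

lemma N01_Iio (a : ℝ) : gaussianReal 0 1 (Set.Iio a) = gaussianReal 0 1 (Set.Iic a) := by
  refine le_antisymm (measure_mono Set.Iio_subset_Iic_self) ?_
  calc gaussianReal 0 1 (Set.Iic a) = gaussianReal 0 1 (Set.Iio a ∪ {a}) := by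
        rw [Set.Iio_union_right]
    _ ≤ gaussianReal 0 1 (Set.Iio a) + gaussianReal 0 1 {a} := measure_union_le _ _
    _ = gaussianReal 0 1 (Set.Iio a) := by rw [N01_singleton, add_zero]

lemma N01_Ici_toReal (a : ℝ) :
    (gaussianReal 0 1 (Set.Ici a)).toReal = 1 - stdGaussianCDF a := by
  rw [← Set.compl_Iio, measure_compl measurableSet_Iio (measure_ne_top _ _), measure_univ,
    ENNReal.toReal_sub_of_le prob_le_one ENNReal.one_ne_top, ENNReal.toReal_one, N01_Iio,
    stdGaussianCDF]

lemma N01_Icc_toReal {a : ℝ} (ha : 0 ≤ a) :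
    (gaussianReal 0 1 (Set.Icc (-a) a)).toReal = stdGaussianCDF a - stdGaussianCDF (-a) := by
  have hset : Set.Icc (-a) a = Set.Iic a \ Set.Iio (-a) := by
    ext x
    simp only [Set.mem_Icc, Set.mem_diff, Set.mem_Iic, Set.mem_Iio, not_lt]
    tauto
  have hsub : Set.Iio (-a) ⊆ Set.Iic a := fun x hx => by simp only [Set.mem_Iio] at hx; simp only [Set.mem_Iic]; linarith
  rw [hset, measure_diff hsub measurableSet_Iio.nullMeasurableSet (measure_ne_top _ _),
    ENNReal.toReal_sub_of_le (measure_mono hsub) (measure_ne_top _ _), N01_Iio,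
    stdGaussianCDF, stdGaussianCDF]

lemma gaussian_eq_map (σ : ℝ) (hσ : 0 < σ) (μ : ℝ) :
    gaussianReal μ ⟨σ ^ 2, sq_nonneg σ⟩
      = (gaussianReal 0 1).map (fun x => σ * x + μ) := by
  have h1 : (gaussianReal 0 1).map (fun x => σ * x) = gaussianReal 0 ⟨σ ^ 2, sq_nonneg σ⟩ := by
    have h := gaussianReal_map_const_mul (μ := 0) (v := 1) σ
    simp at h
    exact h
  have h2 : (fun x => σ * x + μ) = (fun x => x + μ) ∘ (fun x => σ * x) := rfl
  rw [h2, ← Measure.map_map (measurable_add_const μ) (measurable_const_mul σ), h1]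
  erw [gaussianReal_map_add_const, zero_add]

lemma gaussian_pdf_le_iff (σ : ℝ) (hσ : 0 < σ) {μp μq : ℝ} (h : μq < μp) (x : ℝ) :
    gaussianPDFReal μq ⟨σ ^ 2, sq_nonneg σ⟩ x ≤ gaussianPDFReal μp ⟨σ ^ 2, sq_nonneg σ⟩ x
      ↔ (μp + μq) / 2 ≤ x := by
  have hvr : (0:ℝ) < (NNReal.toReal ⟨σ ^ 2, sq_nonneg σ⟩) :=
    show (0:ℝ) < σ ^ 2 by positivity
  have h2v : (0:ℝ) < 2 * (NNReal.toReal ⟨σ ^ 2, sq_nonneg σ⟩) := by linarith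
  have hC : (0:ℝ) < (Real.sqrt (2 * Real.pi * (NNReal.toReal ⟨σ ^ 2, sq_nonneg σ⟩)))⁻¹ := by
    have hπ := Real.pi_pos
    have h' : (0:ℝ) < 2 * Real.pi * (NNReal.toReal ⟨σ ^ 2, sq_nonneg σ⟩) := by positivity
    exact inv_pos.mpr (Real.sqrt_pos.mpr h')
  unfold gaussianPDFReal
  rw [mul_le_mul_iff_of_pos_left hC, Real.exp_le_exp,
    div_le_div_iff_of_pos_right h2v]
  constructor
  · intro hle; nlinarith
  · intro hle; nlinarith

lemma prob_compl_toReal (P : Measure ℝ) [IsProbabilityMeasure P] {A : Set ℝ}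
    (hA : MeasurableSet A) : (P Aᶜ).toReal = 1 - (P A).toReal := by
  rw [measure_compl hA (measure_ne_top _ _), measure_univ,
    ENNReal.toReal_sub_of_le prob_le_one ENNReal.one_ne_top, ENNReal.toReal_one]

lemma tvDist_le_symm (P Q : Measure ℝ) [IsProbabilityMeasure P] [IsProbabilityMeasure Q] :
    tvDist P Q ≤ tvDist Q P := by
  haveI : Nonempty {A : Set ℝ // MeasurableSet A} := ⟨⟨∅, MeasurableSet.empty⟩⟩
  have hbdd : BddAbove (Set.range
      (fun A : {A : Set ℝ // MeasurableSet A} => (Q A.1).toReal - (P A.1).toReal)) := by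
    refine ⟨1, ?_⟩
    rintro y ⟨A, rfl⟩
    have h1 : (Q A.1).toReal ≤ 1 := by
      rw [← ENNReal.toReal_one]
      exact ENNReal.toReal_mono ENNReal.one_ne_top prob_le_one
    have h2 : (0:ℝ) ≤ (P A.1).toReal := ENNReal.toReal_nonneg
    simpa using by linarith
  refine ciSup_le fun A => ?_
  have hEq : (P A.1).toReal - (Q A.1).toReal
      = (Q A.1ᶜ).toReal - (P A.1ᶜ).toReal := by
    rw [prob_compl_toReal P A.2, prob_compl_toReal Q A.2]; ring
  rw [hEq]
  exact le_ciSup hbdd ⟨A.1ᶜ, A.2.compl⟩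

lemma tvDist_symm (P Q : Measure ℝ) [IsProbabilityMeasure P] [IsProbabilityMeasure Q] :
    tvDist P Q = tvDist Q P :=
  le_antisymm (tvDist_le_symm P Q) (tvDist_le_symm Q P)

lemma tv_helper (σ : ℝ) (hσ : 0 < σ) {μp μq : ℝ} (h : μq < μp) :
    tvDist (gaussianReal μp ⟨σ ^ 2, sq_nonneg σ⟩) (gaussianReal μq ⟨σ ^ 2, sq_nonneg σ⟩)
      = stdGaussianCDF ((μp - μq) / (2 * σ)) - stdGaussianCDF (-((μp - μq) / (2 * σ))) := by
  haveI : Nonempty {A : Set ℝ // MeasurableSet A} := ⟨⟨∅, MeasurableSet.empty⟩⟩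
  set v : NNReal := ⟨σ ^ 2, sq_nonneg σ⟩ with hv_def
  have hv : v ≠ 0 := by
    intro h0
    have h1 : NNReal.toReal v = 0 := by rw [h0]; simp
    have h2 : NNReal.toReal v = σ ^ 2 := rfl
    nlinarith
  set α : ℝ := (μp - μq) / (2 * σ) with hα_def
  set m : ℝ := (μp + μq) / 2 with hm_def
  set p : ℝ → ℝ := gaussianPDFReal μp v with hp_def
  set q : ℝ → ℝ := gaussianPDFReal μq v with hq_def
  set P : Measure ℝ := gaussianReal μp v with hP_def
  set Q : Measure ℝ := gaussianReal μq v with hQ_def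
  -- representation of the difference as an integral
  have repr : ∀ A : Set ℝ, MeasurableSet A →
      (P A).toReal - (Q A).toReal = ∫ x in A, (p x - q x) := by
    intro A hA
    rw [hP_def, hQ_def, gaussianReal_apply_eq_integral _ hv, gaussianReal_apply_eq_integral _ hv,
      ENNReal.toReal_ofReal (setIntegral_nonneg hA fun x _ => gaussianPDFReal_nonneg _ _ _),
      ENNReal.toReal_ofReal (setIntegral_nonneg hA fun x _ => gaussianPDFReal_nonneg _ _ _),
      ← integral_sub ((integrable_gaussianPDFReal μp v).restrict)
        ((integrable_gaussianPDFReal μq v).restrict)]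
  -- preimage computations
  have hPH : (P (Set.Ici m)).toReal = 1 - stdGaussianCDF (-α) := by
    rw [hP_def, hv_def, gaussian_eq_map σ hσ μp,
      Measure.map_apply (by fun_prop) measurableSet_Ici]
    have hpre : (fun x => σ * x + μp) ⁻¹' (Set.Ici m) = Set.Ici (-α) := by
      ext x
      simp only [Set.mem_preimage, Set.mem_Ici]
      rw [show (-α : ℝ) = (m - μp) / σ by
        rw [hα_def, hm_def]; field_simp; ring, div_le_iff₀ hσ]
      constructor <;> intro hx <;> nlinarith [mul_comm x σ]
    rw [hpre]
    exact N01_Ici_toReal (-α)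
  have hQH : (Q (Set.Ici m)).toReal = 1 - stdGaussianCDF α := by
    rw [hQ_def, hv_def, gaussian_eq_map σ hσ μq,
      Measure.map_apply (by fun_prop) measurableSet_Ici]
    have hpre : (fun x => σ * x + μq) ⁻¹' (Set.Ici m) = Set.Ici α := by
      ext x
      simp only [Set.mem_preimage, Set.mem_Ici]
      rw [show (α : ℝ) = (m - μq) / σ by
        rw [hα_def, hm_def]; field_simp; ring, div_le_iff₀ hσ]
      constructor <;> intro hx <;> nlinarith [mul_comm x σ]
    rw [hpre]
    exact N01_Ici_toReal α
  -- pointwise comparison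
  have key : ∀ x : ℝ, q x ≤ p x ↔ m ≤ x := by
    intro x
    rw [hp_def, hq_def, hv_def, hm_def]
    exact gaussian_pdf_le_iff σ hσ h x
  -- integrability
  have hip : Integrable p := integrable_gaussianPDFReal μp v
  have hiq : Integrable q := integrable_gaussianPDFReal μq v
  have hipq : Integrable (fun x => p x - q x) := hip.sub hiq
  set g : ℝ → ℝ := fun x => max (p x - q x) 0 with hg_def
  have hgint : Integrable g := hipq.pos_part
  -- the bound
  have bound : ∀ A : Set ℝ, MeasurableSet A →
      ∫ x in A, (p x - q x) ≤ ∫ x in Set.Ici m, (p x - q x) := by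
    intro A hA
    have step1 : ∫ x in A, (p x - q x) ≤ ∫ x in A, g x :=
      integral_mono hipq.restrict hgint.restrict fun x => le_max_left _ _
    have step2 : ∫ x in A, g x ≤ ∫ x, g x :=
      setIntegral_le_integral hgint (ae_of_all _ fun x => le_max_right _ _)
    have step3 : ∫ x, g x = (∫ x in Set.Ici m, g x) + ∫ x in (Set.Ici m)ᶜ, g x :=
      (integral_add_compl measurableSet_Ici hgint).symm
    have step4 : ∫ x in Set.Ici m, g x = ∫ x in Set.Ici m, (p x - q x) := by
      refine setIntegral_congr_fun measurableSet_Ici fun x hx => ?_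
      have : q x ≤ p x := (key x).mpr hx
      simp [hg_def]; linarith
    have step5 : ∫ x in (Set.Ici m)ᶜ, g x = 0 := by
      rw [show (0:ℝ) = ∫ x in (Set.Ici m)ᶜ, (0:ℝ) by simp]
      refine setIntegral_congr_fun measurableSet_Ici.compl fun x hx => ?_
      have hxm : ¬ (m ≤ x) := hx
      have : p x ≤ q x := by
        by_contra hcon
        exact hxm ((key x).mp (le_of_not_ge hcon))
      simp [hg_def]; linarith
    linarith [step1, step2, step3.symm, step4, step5]
  -- value at the optimal set
  have hval : (P (Set.Ici m)).toReal - (Q (Set.Ici m)).toReal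
      = stdGaussianCDF α - stdGaussianCDF (-α) := by
    rw [hPH, hQH]; ring
  -- conclusion
  have hbdd : BddAbove (Set.range
      (fun A : {A : Set ℝ // MeasurableSet A} => (P A.1).toReal - (Q A.1).toReal)) := by
    refine ⟨stdGaussianCDF α - stdGaussianCDF (-α), ?_⟩
    rintro y ⟨A, rfl⟩
    calc (P A.1).toReal - (Q A.1).toReal = ∫ x in A.1, (p x - q x) := repr A.1 A.2
      _ ≤ ∫ x in Set.Ici m, (p x - q x) := bound A.1 A.2
      _ = stdGaussianCDF α - stdGaussianCDF (-α) := by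
          rw [← repr (Set.Ici m) measurableSet_Ici]; exact hval
  refine le_antisymm (ciSup_le fun A => ?_) ?_
  · calc (P A.1).toReal - (Q A.1).toReal = ∫ x in A.1, (p x - q x) := repr A.1 A.2
      _ ≤ ∫ x in Set.Ici m, (p x - q x) := bound A.1 A.2
      _ = stdGaussianCDF α - stdGaussianCDF (-α) := by
          rw [← repr (Set.Ici m) measurableSet_Ici]; exact hval
  · rw [← hval]
    exact le_ciSup hbdd (⟨Set.Ici m, measurableSet_Ici⟩ : {A : Set ℝ // MeasurableSet A})


/-- for Gaussians of common variance `σ²`,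
`tv(N(μ_p, σ²), N(μ_q, σ²)) = Φ(α) − Φ(−α)` with `α = |μ_p − μ_q|/(2σ)`; equivalently it
equals the `N(0,1)`-measure of the interval `[−α, α]`. -/
theorem gaussian_tv (σ : ℝ) (hσ : 0 < σ) (μp μq : ℝ) :
    tvDist (gaussianReal μp ⟨σ ^ 2, sq_nonneg σ⟩) (gaussianReal μq ⟨σ ^ 2, sq_nonneg σ⟩)
        = stdGaussianCDF (|μp - μq| / (2 * σ)) - stdGaussianCDF (-(|μp - μq| / (2 * σ))) ∧
    tvDist (gaussianReal μp ⟨σ ^ 2, sq_nonneg σ⟩) (gaussianReal μq ⟨σ ^ 2, sq_nonneg σ⟩)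
        = (gaussianReal 0 1
            (Set.Icc (-(|μp - μq| / (2 * σ))) (|μp - μq| / (2 * σ)))).toReal := by
  have ha : 0 ≤ |μp - μq| / (2 * σ) := by positivity
  have hIcc := N01_Icc_toReal ha
  have hfirst : tvDist (gaussianReal μp ⟨σ ^ 2, sq_nonneg σ⟩)
      (gaussianReal μq ⟨σ ^ 2, sq_nonneg σ⟩)
      = stdGaussianCDF (|μp - μq| / (2 * σ)) - stdGaussianCDF (-(|μp - μq| / (2 * σ))) := by
    rcases lt_trichotomy μp μq with hlt | heq | hgt
    · refine (@tvDist_symm _ _ (instIsProbabilityMeasureGaussianReal _ _)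
          (instIsProbabilityMeasureGaussianReal _ _)).trans ?_
      rw [tv_helper σ hσ hlt,
        show |μp - μq| = μq - μp by rw [abs_sub_comm]; exact abs_of_pos (by linarith)]
    · subst heq
      haveI : Nonempty {A : Set ℝ // MeasurableSet A} := ⟨⟨∅, MeasurableSet.empty⟩⟩
      have h0 : tvDist (gaussianReal μp ⟨σ ^ 2, sq_nonneg σ⟩)
          (gaussianReal μp ⟨σ ^ 2, sq_nonneg σ⟩) = 0 := by
        rw [tvDist]
        simp only [sub_self]
        exact ciSup_const
      rw [h0]
      simp [sub_self]
    · rw [tv_helper σ hσ hgt, abs_of_pos (by linarith : (0:ℝ) < μp - μq)]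
  exact ⟨hfirst, hfirst.trans hIcc.symm⟩
end
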